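/- Let B be a Banach SSD space, A ⊆ B a maximally q-positive set, and E ∈ 𝓔_c(A). Then Λ_E := λ_E + q is convex, lower semicontinuous, Λ_E ≥ q on B, and A ⊆ {b : Λ_E(b) = q(b)}. -/

import Mathlib

noncomputable def lamE {B : Type*} (E : ℝ → Set B) (b : B) : EReal :=
  sInf ((fun ε : ℝ => (ε : EReal)) '' {ε : ℝ | 0 ≤ ε ∧ b ∈ E ε})

def QPositive {B : Type*} [AddCommGroup B] (q : B → ℝ) (A : Set B) : Prop :=
  A.Nonempty ∧ ∀ b ∈ A, ∀ c ∈ A, 0 ≤ q (b - c)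

def MaxQPositive {B : Type*} [AddCommGroup B] (q : B → ℝ) (A : Set B) : Prop :=
  QPositive q A ∧ ∀ A' : Set B, QPositive q A' → A ⊆ A' → A' = A

def TransportationFormula {B : Type*} [AddCommGroup B] [Module ℝ B]
    (q : B → ℝ) (E : ℝ → Set B) : Prop :=
  ∀ ε₁ ε₂ : ℝ, 0 ≤ ε₁ → 0 ≤ ε₂ → ∀ b₁ ∈ E ε₁, ∀ b₂ ∈ E ε₂,
    ∀ α₁ α₂ : ℝ, 0 ≤ α₁ → 0 ≤ α₂ → α₁ + α₂ = 1 →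
      0 ≤ α₁ * ε₁ + α₂ * ε₂ + α₁ * α₂ * q (b₁ - b₂) ∧
        α₁ • b₁ + α₂ • b₂ ∈ E (α₁ * ε₁ + α₂ * ε₂ + α₁ * α₂ * q (b₁ - b₂))

/-- Membership in the family `𝓔_c(A)` of closed enlargements. -/
def MemEnlFamilyClosed {B : Type*} [AddCommGroup B] [Module ℝ B] [TopologicalSpace B]
    (q : B → ℝ) (A : Set B) (E : ℝ → Set B) : Prop :=
  (∀ ε : ℝ, 0 ≤ ε → A ⊆ E ε) ∧
    (∀ ε₁ ε₂ : ℝ, 0 ≤ ε₁ → ε₁ ≤ ε₂ → E ε₁ ⊆ E ε₂) ∧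
      TransportationFormula q E ∧
        IsClosed {p : ℝ × B | 0 ≤ p.1 ∧ p.2 ∈ E p.1}

/-- Convexity for extended-real-valued functions. -/
def ConvexE {B : Type*} [AddCommGroup B] [Module ℝ B] (f : B → EReal) : Prop :=
  ∀ x y : B, ∀ a b : ℝ, 0 ≤ a → 0 ≤ b → a + b = 1 →
    f (a • x + b • y) ≤ (a : EReal) * f x + (b : EReal) * f y

lemma lamE_nonneg {B : Type*} (E : ℝ → Set B) (b : B) : 0 ≤ lamE E b := by
  refine le_sInf ?_
  rintro z ⟨ε, ⟨hε, _⟩, rfl⟩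
  simp only []
  exact_mod_cast hε

lemma ereal_add_real_le {z : EReal} {c y : ℝ} :
    z + (c : EReal) ≤ (y : EReal) ↔ z ≤ ((y - c : ℝ) : EReal) := by
  induction z using EReal.rec with
  | bot => simp
  | coe x =>
      rw [← EReal.coe_add, EReal.coe_le_coe_iff, EReal.coe_le_coe_iff]
      constructor <;> intro h <;> linarith
  | top =>
      rw [EReal.top_add_coe]
      constructor <;> intro h
      · exact absurd h (EReal.coe_lt_top y).not_ge
      · exact absurd h (EReal.coe_lt_top (y - c)).not_ge

lemma ereal_mul_ne_bot_of_pos {c : ℝ} (hc : 0 < c) {z : EReal} (hz : z ≠ ⊥) :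
    (c : EReal) * z ≠ ⊥ := by
  induction z using EReal.rec with
  | bot => exact absurd rfl hz
  | coe t => rw [← EReal.coe_mul]; exact EReal.coe_ne_bot _
  | top => rw [EReal.coe_mul_top_of_pos hc]; simp

lemma lamE_le_iff {B : Type*} [TopologicalSpace B] (E : ℝ → Set B)
    (hmono : ∀ ε₁ ε₂ : ℝ, 0 ≤ ε₁ → ε₁ ≤ ε₂ → E ε₁ ⊆ E ε₂)
    (hcl : IsClosed {p : ℝ × B | 0 ≤ p.1 ∧ p.2 ∈ E p.1})
    (b : B) (r : ℝ) :
    lamE E b ≤ (r : EReal) ↔ (0 ≤ r ∧ b ∈ E r) := by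
  constructor
  · intro hle
    set T : Set ℝ := {ε : ℝ | 0 ≤ ε ∧ b ∈ E ε} with hT
    have hTne : T.Nonempty := by
      by_contra h
      rw [Set.not_nonempty_iff_eq_empty] at h
      rw [lamE, ← hT, h] at hle
      simp only [Set.image_empty, sInf_empty] at hle
      exact absurd hle (EReal.coe_lt_top r).not_ge
    have hbdd : BddBelow T := ⟨0, fun ε hε => hε.1⟩
    have hTcl : IsClosed T := by
      have : T = (fun ε : ℝ => ((ε, b) : ℝ × B)) ⁻¹' {p : ℝ × B | 0 ≤ p.1 ∧ p.2 ∈ E p.1} := rfl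
      rw [this]
      exact hcl.preimage (continuous_id.prodMk continuous_const)
    have hmem : sInf T ∈ T := hTcl.csInf_mem hTne hbdd
    have hlb : ((sInf T : ℝ) : EReal) ≤ lamE E b := by
      refine le_sInf ?_
      rintro z ⟨ε, hε, rfl⟩
      simp only []
      exact_mod_cast csInf_le hbdd hε
    have h1 : sInf T ≤ r := by exact_mod_cast hlb.trans hle
    exact ⟨hmem.1.trans h1, hmono _ _ hmem.1 h1 hmem.2⟩
  · rintro ⟨hr, hb⟩
    exact sInf_le ⟨r, ⟨hr, hb⟩, rfl⟩

lemma q_alg {B : Type*} [AddCommGroup B] [Module ℝ B]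
    (brk : B →ₗ[ℝ] B →ₗ[ℝ] ℝ)
    (q : B → ℝ) (hq : ∀ b : B, q b = brk b b / 2)
    (x y : B) (a b r₁ r₂ : ℝ) (hab : a + b = 1) :
    (a * r₁ + b * r₂ + a * b * q (x - y)) + q (a • x + b • y)
      = a * (r₁ + q x) + b * (r₂ + q y) := by
  simp only [hq, map_sub, map_add, map_smul, LinearMap.sub_apply, LinearMap.add_apply,
    LinearMap.smul_apply, smul_eq_mul]
  linear_combination ((a * (brk x) x + b * (brk y) y) / 2) * hab

theorem LambdaE_representative
    (B : Type*) [NormedAddCommGroup B] [NormedSpace ℝ B] [CompleteSpace B] [Nontrivial B]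
    (brk : B →ₗ[ℝ] B →ₗ[ℝ] ℝ) (hsym : ∀ b c : B, brk b c = brk c b)
    (q : B → ℝ) (hq : ∀ b : B, q b = brk b b / 2)
    (hpos : ∀ b : B, 0 ≤ (1 / 2) * ‖b‖ ^ 2 + q b)
    (ι : B →L[ℝ] (B →L[ℝ] ℝ)) (hι : ∀ b c : B, ι c b = brk b c)
    (A : Set B) (hA : MaxQPositive q A)
    (E : ℝ → Set B) (hE : MemEnlFamilyClosed q A E) :
    ConvexE (fun b => lamE E b + (q b : EReal)) ∧
    LowerSemicontinuous (fun b => lamE E b + (q b : EReal)) ∧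
    (∀ b : B, (q b : EReal) ≤ lamE E b + (q b : EReal)) ∧
    A ⊆ {b : B | lamE E b + (q b : EReal) = (q b : EReal)} := by
  obtain ⟨hr1, hr2, htrans, hcl⟩ := hE
  have hle_iff := lamE_le_iff E hr2 hcl
  -- part 3
  have hge : ∀ b : B, (q b : EReal) ≤ lamE E b + (q b : EReal) := by
    intro b
    calc (q b : EReal) = 0 + (q b : EReal) := (zero_add _).symm
      _ ≤ lamE E b + (q b : EReal) := add_le_add_left (lamE_nonneg E b) _
  have hne_bot : ∀ b : B, lamE E b + (q b : EReal) ≠ ⊥ := fun b =>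
    fun h => absurd (h ▸ hge b) (h ▸ (EReal.bot_lt_coe (q b)).not_ge)
  refine ⟨?_, ?_, hge, ?_⟩
  · -- convexity
    intro x y a b ha hb hab
    simp only []
    rcases ha.eq_or_lt with ha0 | hapos
    · have hb1 : b = 1 := by linarith
      subst hb1
      rw [← ha0]
      simp only [zero_smul, one_smul, zero_add, EReal.coe_zero, EReal.coe_one, zero_mul, one_mul]
      exact le_rfl
    rcases hb.eq_or_lt with hb0 | hbpos
    · have ha1 : a = 1 := by linarith
      subst ha1
      rw [← hb0]
      simp only [zero_smul, one_smul, add_zero, EReal.coe_zero, EReal.coe_one, zero_mul, one_mul]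
      exact le_rfl
    by_cases hx : lamE E x = ⊤
    · have h1 : lamE E x + (q x : EReal) = ⊤ := by rw [hx]; exact EReal.top_add_coe _
      rw [h1, EReal.mul_top_of_pos (by exact_mod_cast hapos),
        EReal.top_add_of_ne_bot (ereal_mul_ne_bot_of_pos hbpos (hne_bot y))]
      exact le_top
    by_cases hy : lamE E y = ⊤
    · have h1 : lamE E y + (q y : EReal) = ⊤ := by rw [hy]; exact EReal.top_add_coe _
      rw [h1, EReal.mul_top_of_pos (by exact_mod_cast hbpos),
        EReal.add_top_of_ne_bot (ereal_mul_ne_bot_of_pos hapos (hne_bot x))]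
      exact le_top
    have hxb : lamE E x ≠ ⊥ := fun h => absurd (h ▸ lamE_nonneg E x) (by simp [h])
    have hyb : lamE E y ≠ ⊥ := fun h => absurd (h ▸ lamE_nonneg E y) (by simp [h])
    lift lamE E x to ℝ using ⟨hx, hxb⟩ with r₁ hr₁
    lift lamE E y to ℝ using ⟨hy, hyb⟩ with r₂ hr₂
    obtain ⟨h0r₁, hxE⟩ := (hle_iff x r₁).mp hr₁.ge
    obtain ⟨h0r₂, hyE⟩ := (hle_iff y r₂).mp hr₂.ge
    obtain ⟨htpos, htmem⟩ := htrans r₁ r₂ h0r₁ h0r₂ x hxE y hyE a b ha hb hab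
    have hlam : lamE E (a • x + b • y)
        ≤ ((a * r₁ + b * r₂ + a * b * q (x - y) : ℝ) : EReal) :=
      (hle_iff _ _).mpr ⟨htpos, htmem⟩
    calc lamE E (a • x + b • y) + (q (a • x + b • y) : EReal)
        ≤ ((a * r₁ + b * r₂ + a * b * q (x - y) : ℝ) : EReal) + (q (a • x + b • y) : EReal) :=
          add_le_add_left hlam _
      _ = (((a * r₁ + b * r₂ + a * b * q (x - y)) + q (a • x + b • y) : ℝ) : EReal) := by
          norm_cast
      _ = ((a * (r₁ + q x) + b * (r₂ + q y) : ℝ) : EReal) := by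
          rw [q_alg brk q hq x y a b r₁ r₂ hab]
      _ = (a : EReal) * ((r₁ : EReal) + (q x : EReal)) + (b : EReal) * ((r₂ : EReal) + (q y : EReal)) := by
          push_cast
          rfl
  · -- lower semicontinuity
    have hqc : Continuous q := by
      have h1 : Continuous fun b : B => ι b b :=
        isBoundedBilinearMap_apply.continuous.comp (ι.continuous.prodMk continuous_id)
      have h2 : q = fun b => ι b b / 2 := by
        funext b
        rw [hq, hι]
      rw [h2]
      exact h1.div_const 2
    have hclosed : ∀ y : ℝ, IsClosed {b : B | lamE E b + (q b : EReal) ≤ (y : EReal)} := by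
      intro y
      have hset : {b : B | lamE E b + (q b : EReal) ≤ (y : EReal)}
          = (fun b : B => ((y - q b, b) : ℝ × B)) ⁻¹' {p : ℝ × B | 0 ≤ p.1 ∧ p.2 ∈ E p.1} := by
        ext b
        simp only [Set.mem_setOf_eq, Set.mem_preimage]
        rw [ereal_add_real_le, hle_iff]
      rw [hset]
      exact hcl.preimage ((continuous_const.sub hqc).prodMk continuous_id)
    intro x z hz
    revert hz
    induction z using EReal.rec with
    | bot =>
        intro _
        filter_upwards with b
        exact lt_of_lt_of_le (EReal.bot_lt_coe (q b)) (hge b)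
    | coe r =>
        intro hz
        have hopen : IsOpen {b : B | lamE E b + (q b : EReal) ≤ (r : EReal)}ᶜ :=
          (hclosed r).isOpen_compl
        have hxmem : x ∈ {b : B | lamE E b + (q b : EReal) ≤ (r : EReal)}ᶜ := not_le.2 hz
        filter_upwards [hopen.mem_nhds hxmem] with b hb
        exact not_le.1 hb
    | top =>
        intro hz
        exact absurd hz (not_top_lt)
  · -- A ⊆ fixed set
    intro b hb
    have h0 : lamE E b = 0 := by
      refine le_antisymm ?_ (lamE_nonneg E b)
      have := (hle_iff b 0).mpr ⟨le_refl 0, hr1 0 le_rfl hb⟩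
      simpa using this
    simp only [Set.mem_setOf_eq, h0, zero_add]
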